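/- For every general signaling commitment (D1, M, S, P) together with an equilibrium (σ_2, …, σ_n) of the game it induces, there exists an incentive-compatible correlated commitment (D, P̄), with D ∈ Δ(A) and P̄_i : A_i → ℝ≥0 for each i ∈ {2, …, n}, such that: (i) D equals the joint distribution of the outcome (a_1, a_2, …, a_n) obtained by drawing a_1 ∼ D1, s ∼ S(a_1), and independently a_i ∼ σ_i(s_i) for each follower i; and (ii) for each follower i, the expected payment Σ_{a∈A} D(a) P̄_i(a_i) equals the expected value of P_i(a, s) under the same draw. In particular, the leader's expected utility after payments is the same under both commitments. -/

import Mathlib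

open Finset

noncomputable section

/-- A probability distribution on a finite type, given as a weight function. -/
def IsDist {X : Type*} [Fintype X] (σ : X → ℝ) : Prop :=
  (∀ x, 0 ≤ σ x) ∧ ∑ x, σ x = 1

/- Outcomes are pairs `(a1, b)` with `a1 : A1` the leader's action and `b : ∀ i, A i` the
followers' action profile (`F` indexes the followers). -/

/-- The marginal probability that follower `i` is recommended `ai` under `D`. -/
def margF {A1 : Type*} {F : Type*} {A : F → Type*} [Fintype A1] [Fintype F] [DecidableEq F]
    [∀ i, Fintype (A i)] [∀ i, DecidableEq (A i)]
    (D : A1 × (∀ j, A j) → ℝ) (i : F) (ai : A i) : ℝ :=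
  ∑ a ∈ Finset.univ.filter (fun a : A1 × (∀ j, A j) => a.2 i = ai), D a

/-- Incentive compatibility of a correlated commitment `(D, Pb)`: every follower is willing
to follow every recommendation he receives with positive probability. -/
def ICF {A1 : Type*} {F : Type*} {A : F → Type*} [Fintype A1] [Fintype F] [DecidableEq F]
    [∀ i, Fintype (A i)] [∀ i, DecidableEq (A i)]
    (u : ∀ _ : F, A1 × (∀ j, A j) → ℝ) (D : A1 × (∀ j, A j) → ℝ)
    (Pb : ∀ i : F, A i → ℝ) : Prop :=
  ∀ (i : F) (ai : A i), 0 < margF D i ai → ∀ ai' : A i,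
    (∑ a ∈ Finset.univ.filter (fun a : A1 × (∀ j, A j) => a.2 i = ai),
        (D a / margF D i ai) * u i (a.1, Function.update a.2 i ai'))
      ≤ (∑ a ∈ Finset.univ.filter (fun a : A1 × (∀ j, A j) => a.2 i = ai),
          (D a / margF D i ai) * u i a) + Pb i ai

/-- The joint distribution over outcomes induced by a general signaling commitment
`(D1, S)` and follower strategies `σ`: draw `a1 ∼ D1`, `s ∼ S(a1)`, and independently
`a_i ∼ σ_i(s_i)` for each follower `i`. -/
def jointD {A1 : Type*} {F : Type*} {A : F → Type*} {M : Type*}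
    [Fintype A1] [Fintype F] [DecidableEq F] [∀ i, Fintype (A i)] [Fintype M]
    (D1 : A1 → ℝ) (S : A1 → (F → M) → ℝ) (σ : ∀ i : F, M → A i → ℝ) :
    A1 × (∀ j, A j) → ℝ :=
  fun a => ∑ s : F → M, D1 a.1 * S a.1 s * ∏ i, σ i (s i) (a.2 i)

/-- `(σ_2, …, σ_n)` is an equilibrium of the game induced by the general signaling
commitment `(D1, M, S, P)`: for each follower `i` and each message `k` received with
positive probability, every action in the support of `σ i k` maximizes `i`'s expected
utility plus expected payment conditional on receiving `k` (stated in the equivalent form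
multiplied through by the probability of receiving `k`). -/
def SigEqm {A1 : Type*} {F : Type*} {A : F → Type*} {M : Type*}
    [Fintype A1] [Fintype F] [DecidableEq F] [∀ i, Fintype (A i)] [∀ i, DecidableEq (A i)]
    [Fintype M] [DecidableEq M]
    (u : ∀ _ : F, A1 × (∀ j, A j) → ℝ)
    (P : ∀ _ : F, A1 × (∀ j, A j) → (F → M) → ℝ)
    (D1 : A1 → ℝ) (S : A1 → (F → M) → ℝ) (σ : ∀ i : F, M → A i → ℝ) : Prop :=
  ∀ (i : F) (k : M),
    (0 < ∑ a1 : A1, ∑ s ∈ Finset.univ.filter (fun s : F → M => s i = k), D1 a1 * S a1 s) →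
    ∀ ai : A i, 0 < σ i k ai → ∀ ai' : A i,
      (∑ a1 : A1, ∑ s ∈ Finset.univ.filter (fun s : F → M => s i = k), ∑ b : ∀ j, A j,
          D1 a1 * S a1 s * (∏ j, σ j (s j) (b j)) *
            (u i (a1, Function.update b i ai') + P i (a1, Function.update b i ai') s))
        ≤ (∑ a1 : A1, ∑ s ∈ Finset.univ.filter (fun s : F → M => s i = k), ∑ b : ∀ j, A j,
            D1 a1 * S a1 s * (∏ j, σ j (s j) (b j)) *
              (u i (a1, Function.update b i ai) + P i (a1, Function.update b i ai) s))

private lemma sum_filter_prod {A1 B : Type*} [Fintype A1] [Fintype B]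
    (p : B → Prop) [DecidablePred p] (f : A1 × B → ℝ) :
    ∑ a ∈ Finset.univ.filter (fun a : A1 × B => p a.2), f a
      = ∑ a1, ∑ b ∈ Finset.univ.filter p, f (a1, b) := by
  rw [Finset.sum_filter, Fintype.sum_prod_type]
  simp [Finset.sum_filter]

private lemma sum_fiber_update {F : Type*} {A : F → Type*} [Fintype F] [DecidableEq F]
    [∀ i, Fintype (A i)] [∀ i, DecidableEq (A i)]
    (i : F) (ψ : (∀ j, A j) → ℝ) (hψ : ∀ b x, ψ (Function.update b i x) = ψ b)
    (t t' : A i) :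
    ∑ b ∈ Finset.univ.filter (fun b : ∀ j, A j => b i = t), ψ b
      = ∑ b ∈ Finset.univ.filter (fun b : ∀ j, A j => b i = t'), ψ b := by
  refine Finset.sum_nbij' (fun b => Function.update b i t') (fun b => Function.update b i t)
    ?_ ?_ ?_ ?_ ?_
  · intro b _; simp
  · intro b _; simp
  · intro b hb
    have hb2 : b i = t := (Finset.mem_filter.1 hb).2
    show Function.update (Function.update b i t') i t = b
    rw [Function.update_idem, ← hb2, Function.update_eq_self]
  · intro b hb
    have hb2 : b i = t' := (Finset.mem_filter.1 hb).2
    show Function.update (Function.update b i t) i t' = b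
    rw [Function.update_idem, ← hb2, Function.update_eq_self]
  · intro b _
    exact (hψ b t').symm

private lemma sum_mul_fiber {F : Type*} {A : F → Type*} [Fintype F] [DecidableEq F]
    [∀ i, Fintype (A i)] [∀ i, DecidableEq (A i)]
    (i : F) (ai : A i) (c : A i → ℝ) (hc : ∑ t, c t = 1)
    (ψ : (∀ j, A j) → ℝ) (hψ : ∀ b x, ψ (Function.update b i x) = ψ b) :
    ∑ b ∈ Finset.univ.filter (fun b : ∀ j, A j => b i = ai), c (b i) * ψ b
      = c ai * ∑ b, c (b i) * ψ b := by
  have h1 : ∀ t : A i, ∑ b ∈ Finset.univ.filter (fun b : ∀ j, A j => b i = t), c (b i) * ψ b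
      = c t * ∑ b ∈ Finset.univ.filter (fun b : ∀ j, A j => b i = ai), ψ b := by
    intro t
    calc ∑ b ∈ Finset.univ.filter (fun b : ∀ j, A j => b i = t), c (b i) * ψ b
        = ∑ b ∈ Finset.univ.filter (fun b : ∀ j, A j => b i = t), c t * ψ b :=
          Finset.sum_congr rfl fun b hb => by rw [(Finset.mem_filter.1 hb).2]
      _ = ∑ b ∈ Finset.univ.filter (fun b : ∀ j, A j => b i = ai), c t * ψ b :=
          sum_fiber_update i (fun b => c t * ψ b) (fun b x => by show c t * ψ (Function.update b i x) = c t * ψ b; rw [hψ]) t ai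
      _ = c t * ∑ b ∈ Finset.univ.filter (fun b : ∀ j, A j => b i = ai), ψ b := by
          rw [Finset.mul_sum]
  have h2 : ∑ b, c (b i) * ψ b
      = ∑ b ∈ Finset.univ.filter (fun b : ∀ j, A j => b i = ai), ψ b := by
    rw [← Finset.sum_fiberwise Finset.univ (fun b : ∀ j, A j => b i)
      (fun b => c (b i) * ψ b)]
    calc (∑ t, ∑ b ∈ Finset.univ.filter (fun b : ∀ j, A j => b i = t), c (b i) * ψ b)
        = ∑ t, c t * ∑ b ∈ Finset.univ.filter (fun b : ∀ j, A j => b i = ai), ψ b :=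
          Finset.sum_congr rfl fun t _ => h1 t
      _ = _ := by rw [← Finset.sum_mul, hc, one_mul]
  rw [h1 ai, h2]
theorem stmt18 {A1 : Type*} {F : Type*} {A : F → Type*} {M : Type*}
    [Fintype A1] [Nonempty A1] [Fintype F] [DecidableEq F]
    [∀ i, Fintype (A i)] [∀ i, DecidableEq (A i)] [∀ i, Nonempty (A i)]
    [Fintype M] [DecidableEq M] [Nonempty M]
    (u1 : A1 × (∀ j, A j) → ℝ) (u : ∀ _ : F, A1 × (∀ j, A j) → ℝ)
    (D1 : A1 → ℝ) (hD1 : IsDist D1)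
    (S : A1 → (F → M) → ℝ) (hS : ∀ a1, IsDist (S a1))
    (P : ∀ _ : F, A1 × (∀ j, A j) → (F → M) → ℝ) (hP : ∀ i a s, 0 ≤ P i a s)
    (σ : ∀ i : F, M → A i → ℝ) (hσ : ∀ i k, IsDist (σ i k))
    (heq : SigEqm u P D1 S σ) :
    ∃ (D : A1 × (∀ j, A j) → ℝ) (Pb : ∀ i : F, A i → ℝ),
      IsDist D ∧ (∀ i ai, 0 ≤ Pb i ai) ∧
      -- (i) `D` is the joint outcome distribution of the signaling commitment
      (∀ a : A1 × (∀ j, A j), D a = jointD D1 S σ a) ∧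
      -- the correlated commitment `(D, Pb)` is incentive compatible
      ICF u D Pb ∧
      -- (ii) expected payments to each follower agree
      (∀ i : F,
        (∑ a : A1 × (∀ j, A j), D a * Pb i (a.2 i))
          = ∑ a1 : A1, ∑ s : F → M, ∑ b : ∀ j, A j,
              D1 a1 * S a1 s * (∏ j, σ j (s j) (b j)) * P i (a1, b) s) ∧
      -- in particular, the leader's expected utility after payments is the same
      ((∑ a : A1 × (∀ j, A j), D a * (u1 a - ∑ i : F, Pb i (a.2 i)))
        = ∑ a1 : A1, ∑ s : F → M, ∑ b : ∀ j, A j,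
            D1 a1 * S a1 s * (∏ j, σ j (s j) (b j)) *
              (u1 (a1, b) - ∑ i : F, P i (a1, b) s)) := by
  classical
  set W : A1 → (F → M) → (∀ j, A j) → ℝ :=
    fun a1 s b => D1 a1 * S a1 s * ∏ j, σ j (s j) (b j) with hWdef
  have hW0 : ∀ a1 s b, 0 ≤ W a1 s b := fun a1 s b =>
    mul_nonneg (mul_nonneg (hD1.1 a1) ((hS a1).1 s))
      (Finset.prod_nonneg fun j _ => (hσ j (s j)).1 (b j))
  set D : A1 × (∀ j, A j) → ℝ := fun a => ∑ s, W a.1 s a.2 with hDdef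
  have hDjoint : ∀ a, D a = jointD D1 S σ a := fun a => by
    simp only [hDdef, hWdef, jointD]
  have hD0 : ∀ a, 0 ≤ D a := fun a => Finset.sum_nonneg fun s _ => hW0 _ _ _
  set T : ∀ i : F, A i → ℝ := fun i ai =>
    ∑ a1, ∑ s : F → M, ∑ b ∈ Finset.univ.filter (fun b : ∀ j, A j => b i = ai),
      W a1 s b * P i (a1, b) s with hTdef
  have hT0 : ∀ i ai, 0 ≤ T i ai := fun i ai =>
    Finset.sum_nonneg fun a1 _ => Finset.sum_nonneg fun s _ => Finset.sum_nonneg fun b _ =>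
      mul_nonneg (hW0 _ _ _) (hP _ _ _)
  set Pb : ∀ i : F, A i → ℝ := fun i ai =>
    if 0 < margF D i ai then T i ai / margF D i ai else 0 with hPbdef
  -- margF in terms of W
  have hmargW : ∀ (i : F) (ai : A i), margF D i ai
      = ∑ a1, ∑ s : F → M, ∑ b ∈ Finset.univ.filter (fun b : ∀ j, A j => b i = ai),
          W a1 s b := by
    intro i ai
    unfold margF
    rw [sum_filter_prod (fun b : ∀ j, A j => b i = ai) D]
    refine Finset.sum_congr rfl fun a1 _ => ?_
    rw [Finset.sum_comm]
  have hmarg0 : ∀ (i : F) (ai : A i), 0 ≤ margF D i ai := fun i ai => by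
    rw [hmargW]
    exact Finset.sum_nonneg fun a1 _ => Finset.sum_nonneg fun s _ =>
      Finset.sum_nonneg fun b _ => hW0 _ _ _
  have hfz : ∀ (i : F) (ai : A i), margF D i ai = 0 →
      ∀ a1 s b, b i = ai → W a1 s b = 0 := by
    intro i ai h0 a1 s b hb
    rw [hmargW] at h0
    have h1 := (Finset.sum_eq_zero_iff_of_nonneg fun a1 _ =>
      Finset.sum_nonneg fun s _ => Finset.sum_nonneg fun b _ => hW0 _ _ _).1 h0 a1
        (Finset.mem_univ a1)
    have h2 := (Finset.sum_eq_zero_iff_of_nonneg fun s _ =>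
      Finset.sum_nonneg fun b _ => hW0 _ _ _).1 h1 s (Finset.mem_univ s)
    exact (Finset.sum_eq_zero_iff_of_nonneg fun b _ => hW0 _ _ _).1 h2 b
      (Finset.mem_filter.2 ⟨Finset.mem_univ b, hb⟩)
  have hTz : ∀ (i : F) (ai : A i), margF D i ai = 0 → T i ai = 0 := by
    intro i ai h0
    simp only [hTdef]
    refine Finset.sum_eq_zero fun a1 _ => Finset.sum_eq_zero fun s _ =>
      Finset.sum_eq_zero fun b hb => ?_
    rw [hfz i ai h0 a1 s b (Finset.mem_filter.1 hb).2, zero_mul]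
  -- Pb is nonnegative
  have hPb0 : ∀ i ai, 0 ≤ Pb i ai := by
    intro i ai
    simp only [hPbdef]
    split
    · exact div_nonneg (hT0 i ai) (hmarg0 i ai)
    · exact le_refl 0
  -- IsDist D
  have hprod1 : ∀ s : F → M, ∑ b : ∀ j, A j, ∏ j, σ j (s j) (b j) = 1 := by
    intro s
    rw [← Fintype.piFinset_univ, ← Finset.prod_univ_sum]
    exact Finset.prod_eq_one fun j _ => (hσ j (s j)).2
  have hDsum : ∑ a : A1 × (∀ j, A j), D a = 1 := by
    rw [Fintype.sum_prod_type]
    have h1 : ∀ a1 : A1, (∑ b : ∀ j, A j, D (a1, b)) = D1 a1 := by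
      intro a1
      have : ∀ b : ∀ j, A j, D (a1, b) = ∑ s, W a1 s b := fun b => by simp only [hDdef]
      rw [Finset.sum_congr rfl fun b _ => this b, Finset.sum_comm]
      have h2 : ∀ s, (∑ b : ∀ j, A j, W a1 s b) = D1 a1 * S a1 s := by
        intro s
        simp only [hWdef]
        rw [← Finset.mul_sum, hprod1 s, mul_one]
      rw [Finset.sum_congr rfl fun s _ => h2 s, ← Finset.mul_sum, (hS a1).2, mul_one]
    rw [Finset.sum_congr rfl fun a1 _ => h1 a1, hD1.2]
  -- expected payments agree
  have hPay : ∀ i : F, (∑ a : A1 × (∀ j, A j), D a * Pb i (a.2 i))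
      = ∑ a1, ∑ s : F → M, ∑ b : ∀ j, A j, W a1 s b * P i (a1, b) s := by
    intro i
    rw [← Finset.sum_fiberwise Finset.univ (fun a : A1 × (∀ j, A j) => a.2 i)
      (fun a => D a * Pb i (a.2 i))]
    have h2 : ∀ ai : A i,
        (∑ a ∈ Finset.univ.filter (fun a : A1 × (∀ j, A j) => a.2 i = ai),
          D a * Pb i (a.2 i)) = T i ai := by
      intro ai
      have h3 : (∑ a ∈ Finset.univ.filter (fun a : A1 × (∀ j, A j) => a.2 i = ai),
          D a * Pb i (a.2 i)) = margF D i ai * Pb i ai := by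
        unfold margF
        rw [Finset.sum_mul]
        refine Finset.sum_congr rfl fun a ha => ?_
        rw [(Finset.mem_filter.1 ha).2]
      rw [h3]
      by_cases hm : 0 < margF D i ai
      · simp only [hPbdef, if_pos hm]
        rw [mul_comm, div_mul_cancel₀ _ (ne_of_gt hm)]
      · have hm0 : margF D i ai = 0 := le_antisymm (not_lt.1 hm) (hmarg0 i ai)
        rw [hm0, zero_mul, hTz i ai hm0]
    rw [Finset.sum_congr rfl fun ai _ => h2 ai]
    simp only [hTdef]
    rw [Finset.sum_comm]
    refine Finset.sum_congr rfl fun a1 _ => ?_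
    rw [Finset.sum_comm]
    refine Finset.sum_congr rfl fun s _ => ?_
    exact Finset.sum_fiberwise Finset.univ (fun b : ∀ j, A j => b i)
      (fun b => W a1 s b * P i (a1, b) s)
  -- expected leader utility
  have hU1 : (∑ a : A1 × (∀ j, A j), D a * u1 a)
      = ∑ a1, ∑ s : F → M, ∑ b : ∀ j, A j, W a1 s b * u1 (a1, b) := by
    rw [Fintype.sum_prod_type]
    refine Finset.sum_congr rfl fun a1 _ => ?_
    have h1 : ∀ b : ∀ j, A j, D (a1, b) * u1 (a1, b) = ∑ s, W a1 s b * u1 (a1, b) := by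
      intro b
      simp only [hDdef]
      rw [Finset.sum_mul]
    rw [Finset.sum_congr rfl fun b _ => h1 b, Finset.sum_comm]
  -- incentive compatibility
  have hIC : ICF u D Pb := by
    intro i ai hm ai'
    have hPbi : Pb i ai = T i ai / margF D i ai := by simp only [hPbdef, if_pos hm]
    -- numerator inequality
    have hXa : ∀ x : A i,
        (∑ a ∈ Finset.univ.filter (fun a : A1 × (∀ j, A j) => a.2 i = ai),
          D a * u i (a.1, Function.update a.2 i x))
        = ∑ a1, ∑ s : F → M, ∑ b ∈ Finset.univ.filter (fun b : ∀ j, A j => b i = ai),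
            W a1 s b * u i (a1, Function.update b i x) := by
      intro x
      rw [sum_filter_prod (fun b : ∀ j, A j => b i = ai)
        (fun a => D a * u i (a.1, Function.update a.2 i x))]
      refine Finset.sum_congr rfl fun a1 _ => ?_
      have h1 : ∀ b : ∀ j, A j, D (a1, b) * u i (a1, Function.update b i x)
          = ∑ s, W a1 s b * u i (a1, Function.update b i x) := by
        intro b
        simp only [hDdef]
        rw [Finset.sum_mul]
      rw [Finset.sum_congr rfl fun b _ => h1 b, Finset.sum_comm]
    -- the key per-(a1,s) identity
    have key : ∀ (x : A i) (a1 : A1) (s : F → M),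
        (∑ b ∈ Finset.univ.filter (fun b : ∀ j, A j => b i = ai),
          W a1 s b * (u i (a1, Function.update b i x)
            + P i (a1, Function.update b i x) s))
        = σ i (s i) ai * ∑ b : ∀ j, A j,
            W a1 s b * (u i (a1, Function.update b i x)
              + P i (a1, Function.update b i x) s) := by
      intro x a1 s
      set ψ : (∀ j, A j) → ℝ := fun b =>
        D1 a1 * S a1 s * (∏ j ∈ Finset.univ.erase i, σ j (s j) (b j)) *
          (u i (a1, Function.update b i x) + P i (a1, Function.update b i x) s) with hψdef
      have hψ : ∀ b y, ψ (Function.update b i y) = ψ b := by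
        intro b y
        simp only [hψdef, Function.update_idem]
        congr 2
        refine Finset.prod_congr rfl fun j hj => ?_
        rw [Function.update_of_ne (Finset.ne_of_mem_erase hj)]
      have hterm : ∀ b : ∀ j, A j,
          W a1 s b * (u i (a1, Function.update b i x)
            + P i (a1, Function.update b i x) s)
          = σ i (s i) (b i) * ψ b := by
        intro b
        simp only [hWdef, hψdef]
        rw [← Finset.mul_prod_erase Finset.univ (fun j => σ j (s j) (b j))
          (Finset.mem_univ i)]
        ring
      rw [Finset.sum_congr rfl fun b _ => hterm b,
        sum_mul_fiber i ai (σ i (s i)) (hσ i (s i)).2 ψ hψ]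
      rw [Finset.sum_congr rfl fun b (_ : b ∈ Finset.univ) => (hterm b).symm]
    -- fiber the s-sum by the received message
    have hfib : ∀ x : A i,
        (∑ a1, ∑ s : F → M, ∑ b ∈ Finset.univ.filter (fun b : ∀ j, A j => b i = ai),
          W a1 s b * (u i (a1, Function.update b i x)
            + P i (a1, Function.update b i x) s))
        = ∑ k : M, σ i k ai * ∑ a1, ∑ s ∈ Finset.univ.filter (fun s : F → M => s i = k),
            ∑ b : ∀ j, A j, W a1 s b * (u i (a1, Function.update b i x)
              + P i (a1, Function.update b i x) s) := by
      intro x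
      have h1 : ∀ a1 : A1,
          (∑ s : F → M, ∑ b ∈ Finset.univ.filter (fun b : ∀ j, A j => b i = ai),
            W a1 s b * (u i (a1, Function.update b i x)
              + P i (a1, Function.update b i x) s))
          = ∑ k : M, ∑ s ∈ Finset.univ.filter (fun s : F → M => s i = k),
              ∑ b ∈ Finset.univ.filter (fun b : ∀ j, A j => b i = ai),
                W a1 s b * (u i (a1, Function.update b i x)
                  + P i (a1, Function.update b i x) s) :=
        fun a1 => (Finset.sum_fiberwise Finset.univ (fun s : F → M => s i) _).symm
      rw [Finset.sum_congr rfl fun a1 _ => h1 a1, Finset.sum_comm]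
      refine Finset.sum_congr rfl fun k _ => ?_
      rw [Finset.mul_sum]
      refine Finset.sum_congr rfl fun a1 _ => ?_
      rw [Finset.mul_sum]
      refine Finset.sum_congr rfl fun s hs => ?_
      have hsk : s i = k := (Finset.mem_filter.1 hs).2
      rw [key x a1 s, hsk]
    -- the equilibrium comparison, message by message
    have hcomp : ∀ k : M,
        (σ i k ai * ∑ a1, ∑ s ∈ Finset.univ.filter (fun s : F → M => s i = k),
          ∑ b : ∀ j, A j, W a1 s b * (u i (a1, Function.update b i ai')
            + P i (a1, Function.update b i ai') s))
        ≤ σ i k ai * ∑ a1, ∑ s ∈ Finset.univ.filter (fun s : F → M => s i = k),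
            ∑ b : ∀ j, A j, W a1 s b * (u i (a1, Function.update b i ai)
              + P i (a1, Function.update b i ai) s) := by
      intro k
      rcases lt_or_eq_of_le ((hσ i k).1 ai) with hs | hs
      · by_cases hpos : 0 < ∑ a1 : A1,
            ∑ s ∈ Finset.univ.filter (fun s : F → M => s i = k), D1 a1 * S a1 s
        · refine mul_le_mul_of_nonneg_left ?_ (le_of_lt hs)
          exact heq i k hpos ai hs ai'
        · have h0 : (∑ a1 : A1, ∑ s ∈ Finset.univ.filter
              (fun s : F → M => s i = k), D1 a1 * S a1 s) = 0 :=
            le_antisymm (not_lt.1 hpos) (Finset.sum_nonneg fun a1 _ =>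
              Finset.sum_nonneg fun s _ => mul_nonneg (hD1.1 a1) ((hS a1).1 s))
          have hz : ∀ (a1 : A1) (s : F → M), s i = k → D1 a1 * S a1 s = 0 := by
            intro a1 s hsk
            have h1 := (Finset.sum_eq_zero_iff_of_nonneg fun a1 _ =>
              Finset.sum_nonneg fun s _ => mul_nonneg (hD1.1 a1) ((hS a1).1 s)).1 h0 a1
                (Finset.mem_univ a1)
            exact (Finset.sum_eq_zero_iff_of_nonneg fun s _ =>
              mul_nonneg (hD1.1 a1) ((hS a1).1 s)).1 h1 s
                (Finset.mem_filter.2 ⟨Finset.mem_univ s, hsk⟩)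
          have hzz : ∀ x : A i, (∑ a1, ∑ s ∈ Finset.univ.filter
              (fun s : F → M => s i = k), ∑ b : ∀ j, A j,
                W a1 s b * (u i (a1, Function.update b i x)
                  + P i (a1, Function.update b i x) s)) = 0 := by
            intro x
            refine Finset.sum_eq_zero fun a1 _ => Finset.sum_eq_zero fun s hs' =>
              Finset.sum_eq_zero fun b _ => ?_
            have : W a1 s b = 0 := by
              simp only [hWdef]
              rw [hz a1 s (Finset.mem_filter.1 hs').2, zero_mul]
            rw [this, zero_mul]
          rw [hzz ai', hzz ai]
      · rw [← hs, zero_mul, zero_mul]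
    -- put the pieces together
    have hupd : ∀ a ∈ Finset.univ.filter (fun a : A1 × (∀ j, A j) => a.2 i = ai),
        D a * u i a = D a * u i (a.1, Function.update a.2 i ai) := by
      intro a ha
      have h2 : a.2 i = ai := (Finset.mem_filter.1 ha).2
      rw [← h2, Function.update_eq_self]
    have hXP : ∀ x : A i,
        (∑ a1, ∑ s : F → M, ∑ b ∈ Finset.univ.filter (fun b : ∀ j, A j => b i = ai),
          W a1 s b * u i (a1, Function.update b i x))
        ≤ ∑ a1, ∑ s : F → M, ∑ b ∈ Finset.univ.filter (fun b : ∀ j, A j => b i = ai),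
            W a1 s b * (u i (a1, Function.update b i x)
              + P i (a1, Function.update b i x) s) := by
      intro x
      refine Finset.sum_le_sum fun a1 _ => Finset.sum_le_sum fun s _ =>
        Finset.sum_le_sum fun b _ => ?_
      rw [mul_add]
      exact le_add_of_nonneg_right (mul_nonneg (hW0 _ _ _) (hP _ _ _))
    have hsplit : (∑ a1, ∑ s : F → M,
        ∑ b ∈ Finset.univ.filter (fun b : ∀ j, A j => b i = ai),
          W a1 s b * (u i (a1, Function.update b i ai)
            + P i (a1, Function.update b i ai) s))
        = (∑ a1, ∑ s : F → M, ∑ b ∈ Finset.univ.filter (fun b : ∀ j, A j => b i = ai),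
            W a1 s b * u i (a1, Function.update b i ai)) + T i ai := by
      simp only [hTdef]
      rw [← Finset.sum_add_distrib]
      refine Finset.sum_congr rfl fun a1 _ => ?_
      rw [← Finset.sum_add_distrib]
      refine Finset.sum_congr rfl fun s _ => ?_
      rw [← Finset.sum_add_distrib]
      refine Finset.sum_congr rfl fun b hb => ?_
      have hb2 : b i = ai := (Finset.mem_filter.1 hb).2
      rw [mul_add]
      congr 2
      all_goals rw [← hb2, Function.update_eq_self]
    have hnum : (∑ a ∈ Finset.univ.filter (fun a : A1 × (∀ j, A j) => a.2 i = ai),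
        D a * u i (a.1, Function.update a.2 i ai'))
        ≤ (∑ a ∈ Finset.univ.filter (fun a : A1 × (∀ j, A j) => a.2 i = ai),
            D a * u i a) + T i ai := by
      rw [hXa ai', Finset.sum_congr rfl hupd, hXa ai]
      calc (∑ a1, ∑ s : F → M, ∑ b ∈ Finset.univ.filter (fun b : ∀ j, A j => b i = ai),
            W a1 s b * u i (a1, Function.update b i ai'))
          ≤ ∑ a1, ∑ s : F → M, ∑ b ∈ Finset.univ.filter (fun b : ∀ j, A j => b i = ai),
              W a1 s b * (u i (a1, Function.update b i ai')
                + P i (a1, Function.update b i ai') s) := hXP ai'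
        _ = ∑ k : M, σ i k ai * ∑ a1, ∑ s ∈ Finset.univ.filter
              (fun s : F → M => s i = k), ∑ b : ∀ j, A j,
                W a1 s b * (u i (a1, Function.update b i ai')
                  + P i (a1, Function.update b i ai') s) := hfib ai'
        _ ≤ ∑ k : M, σ i k ai * ∑ a1, ∑ s ∈ Finset.univ.filter
              (fun s : F → M => s i = k), ∑ b : ∀ j, A j,
                W a1 s b * (u i (a1, Function.update b i ai)
                  + P i (a1, Function.update b i ai) s) :=
            Finset.sum_le_sum fun k _ => hcomp k
        _ = ∑ a1, ∑ s : F → M, ∑ b ∈ Finset.univ.filter (fun b : ∀ j, A j => b i = ai),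
              W a1 s b * (u i (a1, Function.update b i ai)
                + P i (a1, Function.update b i ai) s) := (hfib ai).symm
        _ = (∑ a1, ∑ s : F → M, ∑ b ∈ Finset.univ.filter
              (fun b : ∀ j, A j => b i = ai),
                W a1 s b * u i (a1, Function.update b i ai)) + T i ai := hsplit
    -- divide through by the marginal
    simp only [div_mul_eq_mul_div, ← Finset.sum_div]
    rw [hPbi, ← add_div]
    exact div_le_div_of_nonneg_right hnum (hmarg0 i ai)
  refine ⟨D, Pb, ⟨hD0, hDsum⟩, hPb0, hDjoint, hIC, fun i => hPay i, ?_⟩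
  -- leader's expected utility
  have hRsplit : (∑ a1, ∑ s : F → M, ∑ b : ∀ j, A j,
      W a1 s b * (u1 (a1, b) - ∑ i : F, P i (a1, b) s))
      = (∑ a1, ∑ s : F → M, ∑ b : ∀ j, A j, W a1 s b * u1 (a1, b))
        - ∑ i : F, ∑ a1, ∑ s : F → M, ∑ b : ∀ j, A j, W a1 s b * P i (a1, b) s := by
    have h1 : ∀ (a1 : A1) (s : F → M) (b : ∀ j, A j),
        W a1 s b * (u1 (a1, b) - ∑ i : F, P i (a1, b) s)
        = W a1 s b * u1 (a1, b) - ∑ i : F, W a1 s b * P i (a1, b) s := by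
      intro a1 s b
      rw [mul_sub, Finset.mul_sum]
    simp only [h1, Finset.sum_sub_distrib]
    congr 1
    calc (∑ a1, ∑ s : F → M, ∑ b : ∀ j, A j, ∑ i : F, W a1 s b * P i (a1, b) s)
        = ∑ a1, ∑ s : F → M, ∑ i : F, ∑ b : ∀ j, A j, W a1 s b * P i (a1, b) s :=
          Finset.sum_congr rfl fun a1 _ => Finset.sum_congr rfl fun s _ =>
            Finset.sum_comm
      _ = ∑ a1, ∑ i : F, ∑ s : F → M, ∑ b : ∀ j, A j, W a1 s b * P i (a1, b) s :=
          Finset.sum_congr rfl fun a1 _ => Finset.sum_comm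
      _ = ∑ i : F, ∑ a1, ∑ s : F → M, ∑ b : ∀ j, A j, W a1 s b * P i (a1, b) s :=
          Finset.sum_comm
  have hLsplit : (∑ a : A1 × (∀ j, A j), D a * (u1 a - ∑ i : F, Pb i (a.2 i)))
      = (∑ a : A1 × (∀ j, A j), D a * u1 a)
        - ∑ i : F, ∑ a : A1 × (∀ j, A j), D a * Pb i (a.2 i) := by
    have h1 : ∀ a : A1 × (∀ j, A j),
        D a * (u1 a - ∑ i : F, Pb i (a.2 i))
        = D a * u1 a - ∑ i : F, D a * Pb i (a.2 i) := by
      intro a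
      rw [mul_sub, Finset.mul_sum]
    simp only [h1, Finset.sum_sub_distrib]
    congr 1
    exact Finset.sum_comm
  rw [hLsplit, hRsplit, hU1]
  congr 1
  exact Finset.sum_congr rfl fun i _ => hPay i
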